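/- For every vertex j, the spectral expression (1/π(j)) · ∑_{k=2}^{n} v_{k,j}²/(1 − λ_k) is at least (1 − π(j))²/π(j), which in turn is at least 2|E|/d_j − 2. (Consequently the average target hitting time H_j satisfies H_j ≥ 2|E|/d_j − 2.) -/

import Mathlib

/-- For every vertex j, (1/π(j))·∑_{k=2}^n v_{k,j}²/(1−λ_k) ≥ (1−π(j))²/π(j) ≥ 2|E|/d_j − 2. -/
theorem stmt_8
    (n : ℕ) (hn : 2 ≤ n)
    (A : Matrix (Fin n) (Fin n) ℝ)
    (hsym : ∀ i j, A i j = A j i)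
    (hnonneg : ∀ i j, 0 ≤ A i j)
    (hdiag : ∀ i, A i i = 0)
    (d : Fin n → ℝ) (hd : ∀ i, d i = ∑ j, A i j)
    (hdpos : ∀ i, 0 < d i)
    (twoE : ℝ) (htwoE : twoE = ∑ i, d i)
    (B : Matrix (Fin n) (Fin n) ℝ)
    (hB : ∀ i j, B i j = A i j / (Real.sqrt (d i) * Real.sqrt (d j)))
    (lam : Fin n → ℝ) (v : Fin n → Fin n → ℝ)
    (hmono : Antitone lam)
    (hlam1 : lam ⟨0, by omega⟩ = 1)
    (heig : ∀ k, B.mulVec (v k) = lam k • v k)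
    (horth : ∀ k l, (∑ x, v k x * v l x) = (if k = l then (1 : ℝ) else 0))
    (hv1 : ∀ j, v ⟨0, by omega⟩ j = Real.sqrt (d j / twoE))
    (hgap : lam ⟨1, by omega⟩ < 1) :
    ∀ j, (twoE / d j - 2 ≤ (1 - d j / twoE) ^ 2 / (d j / twoE)) ∧
      (1 - d j / twoE) ^ 2 / (d j / twoE) ≤
        (twoE / d j) * ∑ k ∈ Finset.univ.filter (fun k : Fin n => k.val ≠ 0), (v k j) ^ 2 / (1 - lam k) := by
  have hne : (Finset.univ : Finset (Fin n)).Nonempty := ⟨⟨0, by omega⟩, Finset.mem_univ _⟩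
  have htE : 0 < twoE := by
    rw [htwoE]; exact Finset.sum_pos (fun i _ => hdpos i) hne
  -- column orthonormality
  set M : Matrix (Fin n) (Fin n) ℝ := Matrix.of v with hM
  have hMMT : M * M.transpose = 1 := by
    ext k l
    simp only [Matrix.mul_apply, Matrix.transpose_apply, hM, Matrix.of_apply, Matrix.one_apply]
    exact horth k l
  have hMTM : M.transpose * M = 1 := mul_eq_one_comm.mp hMMT
  have hcol : ∀ x j, (∑ k, v k x * v k j) = if x = j then 1 else 0 := by
    intro x j
    have h := Matrix.ext_iff.mpr hMTM x j
    simpa [Matrix.mul_apply, Matrix.transpose_apply, hM, Matrix.one_apply] using h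
  have hBjj0 : ∀ j, (∑ k, lam k * v k j ^ 2) = 0 := by
    intro j
    have h1 : (∑ k, lam k * v k j ^ 2) = ∑ k, (∑ x, B j x * v k x) * v k j := by
      refine Finset.sum_congr rfl fun k _ => ?_
      have h := congrFun (heig k) j
      simp only [Matrix.mulVec, dotProduct, Pi.smul_apply, smul_eq_mul] at h
      rw [h]; ring
    rw [h1]
    have h2 : (∑ k, (∑ x, B j x * v k x) * v k j)
        = ∑ x, B j x * (∑ k, v k x * v k j) := by
      have e : (∑ k, (∑ x, B j x * v k x) * v k j)
          = ∑ k, ∑ x, B j x * (v k x * v k j) := by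
        refine Finset.sum_congr rfl fun k _ => ?_
        rw [Finset.sum_mul]
        exact Finset.sum_congr rfl fun x _ => by ring
      rw [e, Finset.sum_comm]
      exact Finset.sum_congr rfl fun x _ => (Finset.mul_sum _ _ _).symm
    rw [h2]
    have h3 : ∀ x, B j x * (∑ k, v k x * v k j) = if x = j then B j j else 0 := by
      intro x
      rw [hcol x j]
      by_cases hx : x = j <;> simp [hx]
    simp only [h3, Finset.sum_ite_eq', Finset.mem_univ, if_true]
    rw [hB j j, hdiag j]
    simp
  intro j
  have hdj := hdpos j
  set p : ℝ := d j / twoE with hp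
  have hppos : 0 < p := div_pos hdj htE
  constructor
  · have e1 : (1 - p) ^ 2 / p = 1 / p - 2 + p := by
      field_simp
      ring
    have e2 : twoE / d j = 1 / p := by
      rw [hp]
      field_simp
    rw [e1, e2]
    linarith [hppos.le]
  · -- main spectral inequality
    set z : Fin n := ⟨0, by omega⟩ with hz
    set S : Finset (Fin n) := Finset.univ.filter (fun k : Fin n => k.val ≠ 0) with hS
    have hSerase : S = Finset.univ.erase z := by
      ext k
      simp [hS, hz, Fin.ext_iff]
    have hv0sq : v z j ^ 2 = p := by
      rw [hz, hv1 j, Real.sq_sqrt (by positivity)]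
    have hsum1 : (∑ k, v k j ^ 2) = 1 := by
      simpa [sq] using hcol j j
    have hA : (∑ k ∈ S, v k j ^ 2) = 1 - p := by
      rw [hSerase, Finset.sum_erase_eq_sub (Finset.mem_univ z), hsum1, hv0sq]
    have hB1 : (∑ k ∈ S, v k j ^ 2 * (1 - lam k)) = 1 := by
      rw [hSerase, Finset.sum_erase_eq_sub (Finset.mem_univ z)]
      have : (∑ k, v k j ^ 2 * (1 - lam k)) = (∑ k, v k j ^ 2) - ∑ k, lam k * v k j ^ 2 := by
        rw [← Finset.sum_sub_distrib]
        exact Finset.sum_congr rfl fun k _ => by ring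
      rw [this, hsum1, hBjj0 j, hlam1]
      · ring
    have hlt : ∀ k ∈ S, lam k < 1 := by
      intro k hk
      simp only [hS, Finset.mem_filter, Finset.mem_univ, true_and] at hk
      have h1k : (⟨1, by omega⟩ : Fin n) ≤ k := by
        have : 1 ≤ k.val := Nat.one_le_iff_ne_zero.mpr hk
        exact this
      exact lt_of_le_of_lt (hmono h1k) hgap
    set T : ℝ := ∑ k ∈ S, v k j ^ 2 / (1 - lam k) with hT
    have hCS : (1 - p) ^ 2 ≤ T := by
      have key := Finset.sum_mul_sq_le_sq_mul_sq S
        (fun k => v k j / Real.sqrt (1 - lam k)) (fun k => v k j * Real.sqrt (1 - lam k))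
      have e1 : (∑ k ∈ S, (v k j / Real.sqrt (1 - lam k)) * (v k j * Real.sqrt (1 - lam k)))
          = ∑ k ∈ S, v k j ^ 2 := by
        refine Finset.sum_congr rfl fun k hk => ?_
        have hpos : 0 < 1 - lam k := by linarith [hlt k hk]
        have hs : Real.sqrt (1 - lam k) ≠ 0 := by positivity
        field_simp
      have e2 : (∑ k ∈ S, (v k j / Real.sqrt (1 - lam k)) ^ 2) = T := by
        refine Finset.sum_congr rfl fun k hk => ?_
        have hpos : 0 < 1 - lam k := by linarith [hlt k hk]
        rw [div_pow, Real.sq_sqrt hpos.le]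
      have e3 : (∑ k ∈ S, (v k j * Real.sqrt (1 - lam k)) ^ 2) = 1 := by
        refine Eq.trans (Finset.sum_congr rfl fun k hk => ?_) hB1
        have hpos : 0 < 1 - lam k := by linarith [hlt k hk]
        rw [mul_pow, Real.sq_sqrt hpos.le]
      rw [e1, e2, e3, hA, mul_one] at key
      exact key
    rw [div_le_iff₀ hppos]
    have h2 : twoE / d j * T * p = T := by
      rw [hp]; field_simp
    rw [h2]
    exact hCS
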